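/- Let G be a group generated by two elements a and b with orders of a, b, and a*b dividing pairwise coprime integers l, m, n. Then G has no nontrivial solvable quotient: any surjective homomorphism from G onto a solvable group has trivial image. -/

import Mathlib

theorem stmt_1 {G : Type*} [Group G] (a b : G) (l m n : ℕ)
    (hgen : Subgroup.closure ({a, b} : Set G) = ⊤)
    (ha : orderOf a ∣ l) (hb : orderOf b ∣ m) (hab : orderOf (a * b) ∣ n)
    (hlm : Nat.Coprime l m) (hln : Nat.Coprime l n) (hmn : Nat.Coprime m n)
    (S : Type*) [Group S] [Group.IsSolvable S] (f : G →* S) (hf : Function.Surjective f) :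
    Subsingleton S := by
  -- Work in the abelianization of S
  set g : G →* Abelianization S := (Abelianization.of).comp f with hg
  have hxl : (g a) ^ l = 1 := by
    have : orderOf (g a) ∣ l := (orderOf_map_dvd g a).trans ha
    exact orderOf_dvd_iff_pow_eq_one.mp this
  have hym : (g b) ^ m = 1 := by
    have : orderOf (g b) ∣ m := (orderOf_map_dvd g b).trans hb
    exact orderOf_dvd_iff_pow_eq_one.mp this
  have habn : (g a * g b) ^ n = 1 := by
    have : orderOf (g (a * b)) ∣ n := (orderOf_map_dvd g (a * b)).trans hab
    simpa [map_mul] using orderOf_dvd_iff_pow_eq_one.mp this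
  have hsplit : (g a) ^ n * (g b) ^ n = 1 := by
    rw [← mul_pow]; exact habn
  -- z := (g a)^n satisfies z^l = 1 and z^m = 1, so z = 1
  have hz : (g a) ^ n = 1 := by
    have h1 : ((g a) ^ n) ^ l = 1 := by
      rw [← pow_mul, mul_comm, pow_mul, hxl, one_pow]
    have h2 : ((g a) ^ n) ^ m = 1 := by
      have : (g a) ^ n = ((g b) ^ n)⁻¹ := eq_inv_of_mul_eq_one_left hsplit
      rw [this, ← inv_pow, ← pow_mul, mul_comm, pow_mul, inv_pow, hym, inv_one, one_pow]
    have hd : orderOf ((g a) ^ n) ∣ Nat.gcd l m :=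
      Nat.dvd_gcd (orderOf_dvd_of_pow_eq_one h1) (orderOf_dvd_of_pow_eq_one h2)
    rw [hlm] at hd
    exact orderOf_eq_one_iff.mp (Nat.eq_one_of_dvd_one hd)
  have hxa : g a = 1 := by
    have hd : orderOf (g a) ∣ Nat.gcd l n :=
      Nat.dvd_gcd (orderOf_dvd_of_pow_eq_one hxl) (orderOf_dvd_of_pow_eq_one hz)
    rw [hln] at hd
    exact orderOf_eq_one_iff.mp (Nat.eq_one_of_dvd_one hd)
  have hyb : g b = 1 := by
    have hyn : (g b) ^ n = 1 := by
      rw [hz, one_mul] at hsplit; exact hsplit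
    have hd : orderOf (g b) ∣ Nat.gcd m n :=
      Nat.dvd_gcd (orderOf_dvd_of_pow_eq_one hym) (orderOf_dvd_of_pow_eq_one hyn)
    rw [hmn] at hd
    exact orderOf_eq_one_iff.mp (Nat.eq_one_of_dvd_one hd)
  -- hence g is trivial
  have hgone : ∀ x : G, g x = 1 := by
    intro x
    have hx : x ∈ Subgroup.closure ({a, b} : Set G) := hgen ▸ Subgroup.mem_top x
    refine Subgroup.closure_induction ?_ (map_one g) ?_ ?_ hx
    · rintro y (rfl | rfl)
      exacts [hxa, hyb]
    · intro y z _ _ hy hz; rw [map_mul, hy, hz, one_mul]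
    · intro y _ hy; rw [map_inv, hy, inv_one]
  -- so Abelianization S is trivial, hence commutator S = ⊤
  have hcomm : commutator S = ⊤ := by
    rw [eq_top_iff]
    intro s _
    obtain ⟨x, rfl⟩ := hf s
    have : Abelianization.of (f x) = 1 := hgone x
    exact (QuotientGroup.eq_one_iff _).mp this
  -- derived series is constantly ⊤
  have hder : ∀ k, derivedSeries S k = ⊤ := by
    intro k
    induction k with
    | zero => rfl
    | succ k ih => rw [derivedSeries_succ, ih]; exact hcomm
  obtain ⟨k, hk⟩ := (isSolvable_def S).mp ‹Group.IsSolvable S›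
  have : (⊤ : Subgroup S) = ⊥ := by rw [← hder k, hk]
  exact subsingleton_of_forall_eq 1 fun s =>
    Subgroup.mem_bot.mp (this ▸ Subgroup.mem_top s)
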